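/- (van Schooten's theorem) Let A₁A₂A₃ be an equilateral triangle and let P be a point on the arc of the circumcircle of A₁A₂A₃ between A₁ and A₂ not containing A₃. Then |A₁P| + |A₂P| = |A₃P|. -/

import Mathlib

set_option maxHeartbeats 1000000 in
lemma vanschooten_alg (a1 a2 b1 b2 c1 c2 p1 p2 r : ℝ)
    (ha : a1^2+a2^2 = r^2) (hb : b1^2+b2^2 = r^2) (hc : c1^2+c2^2 = r^2)
    (hp : p1^2+p2^2 = r^2)
    (h1 : (a1-b1)^2+(a2-b2)^2 = (b1-c1)^2+(b2-c2)^2)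
    (h2 : (b1-c1)^2+(b2-c2)^2 = (c1-a1)^2+(c2-a2)^2)
    (hnz : (a1-b1)^2+(a2-b2)^2 ≠ 0)
    (hsign : ((b1-a1)*(c2-a2) - (b2-a2)*(c1-a1)) * ((b1-a1)*(p2-a2) - (b2-a2)*(p1-a1)) ≤ 0) :
    Real.sqrt ((a1-p1)^2+(a2-p2)^2) + Real.sqrt ((b1-p1)^2+(b2-p2)^2)
      = Real.sqrt ((c1-p1)^2+(c2-p2)^2) := by
  -- equal inner products
  have hY : b1*c1+b2*c2 = a1*b1+a2*b2 := by linear_combination h1/2 - ha/2 + hc/2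
  have hZ : c1*a1+c2*a2 = a1*b1+a2*b2 := by linear_combination h1/2 + h2/2 - hb/2 + hc/2
  -- Gram determinant of (a,b,c) vanishes (rank ≤ 2)
  have gram : (r^2 - (a1*b1+a2*b2))^2 * (r^2 + 2*(a1*b1+a2*b2)) = 0 := by
    linear_combination
      (-(r^2*r^2 - (a1*b1+a2*b2)^2)) * ha
      + (-((a1^2+a2^2)*r^2 - (a1*b1+a2*b2)^2)) * hb
      + (-((a1^2+a2^2)*(b1^2+b2^2) - (a1*b1+a2*b2)^2)) * hc
      + (-(2*(a1*b1+a2*b2)^2 - (a1^2+a2^2)*((a1*b1+a2*b2)+(b1*c1+b2*c2)))) * hY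
      + (-(2*(a1*b1+a2*b2)*(b1*c1+b2*c2) - (b1^2+b2^2)*((a1*b1+a2*b2)+(c1*a1+c2*a2)))) * hZ
  have hd : (a1-b1)^2+(a2-b2)^2 = 2*(r^2 - (a1*b1+a2*b2)) := by linear_combination ha + hb
  have hrt : r^2 - (a1*b1+a2*b2) ≠ 0 := by
    intro h; apply hnz; rw [hd, h, mul_zero]
  have ht : r^2 + 2*(a1*b1+a2*b2) = 0 := by
    rcases mul_eq_zero.mp gram with h | h
    · exact absurd ((pow_eq_zero_iff two_ne_zero).mp h) hrt
    · exact h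
  have hX : a1*b1+a2*b2 = -(r^2)/2 := by linarith
  -- centroid = circumcenter : a + b + c = 0
  have hsum : (a1+b1+c1)^2+(a2+b2+c2)^2 = 0 := by
    linear_combination ha + hb + hc + 2*hY + 2*hZ + 3*ht
  have hz1 : (a1+b1+c1)^2 = 0 :=
    le_antisymm (by linarith [sq_nonneg (a2+b2+c2)]) (sq_nonneg _)
  have hz2 : (a2+b2+c2)^2 = 0 :=
    le_antisymm (by linarith [sq_nonneg (a1+b1+c1)]) (sq_nonneg _)
  have hc1 : c1 = -a1 - b1 := by
    have := (pow_eq_zero_iff two_ne_zero).mp hz1; linarith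
  have hc2 : c2 = -a2 - b2 := by
    have := (pow_eq_zero_iff two_ne_zero).mp hz2; linarith
  subst hc1 hc2
  -- r² > 0
  have h3r : (a1-b1)^2+(a2-b2)^2 = 3*r^2 := by linear_combination ha + hb - ht
  have h3 : 3*r^2 ≠ 0 := h3r ▸ hnz
  have hr2 : 0 < r^2 := by
    by_contra h; push_neg at h; apply h3; nlinarith [sq_nonneg (a1-b1), sq_nonneg (a2-b2)]
  -- sign: r² - 2u - 2v ≤ 0
  have hfd : ((b1-a1)*((-a2-b2)-a2) - (b2-a2)*((-a1-b1)-a1)) * ((b1-a1)*(p2-a2) - (b2-a2)*(p1-a1))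
      = (9/4)*r^2*(r^2 - 2*(a1*p1+a2*p2) - 2*(b1*p1+b2*p2)) := by
    linear_combination (3*(b1^2+b2^2) - 3*(b1*p1+b2*p2))*ha + (3*r^2 - 3*(a1*p1+a2*p2))*hb
      + (-3*(a1*b1+a2*b2) + 3*(a1*p1+a2*p2) + 3*(b1*p1+b2*p2) + (3/2)*r^2)*hX
  have hsign' : r^2 - 2*(a1*p1+a2*p2) - 2*(b1*p1+b2*p2) ≤ 0 := by
    have h9 : (9/4)*r^2*(r^2 - 2*(a1*p1+a2*p2) - 2*(b1*p1+b2*p2)) ≤ 0 := hfd ▸ hsign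
    by_contra h
    push_neg at h
    have := mul_pos (by positivity : (0:ℝ) < (9/4)*r^2) h
    linarith
  -- key products
  have he1 : (a1-p1)^2+(a2-p2)^2 = 2*r^2 - 2*(a1*p1+a2*p2) := by linear_combination ha + hp
  have he2 : (b1-p1)^2+(b2-p2)^2 = 2*r^2 - 2*(b1*p1+b2*p2) := by linear_combination hb + hp
  have he3 : ((-a1-b1)-p1)^2+((-a2-b2)-p2)^2
      = 2*r^2 + 2*(a1*p1+a2*p2) + 2*(b1*p1+b2*p2) := by
    linear_combination ha + hb + hp + 2*hX
  have hq2 : r^2*((2*r^2 - 2*(a1*p1+a2*p2))*(2*r^2 - 2*(b1*p1+b2*p2)))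
      = r^2*((2*(a1*p1+a2*p2) + 2*(b1*p1+b2*p2) - r^2)^2) := by
    linear_combination 4*( (-((b1^2+b2^2)*(p1^2+p2^2) - (b1*p1+b2*p2)^2))*ha
      - (r^2*(p1^2+p2^2) - (a1*p1+a2*p2)^2)*hb
      - (r^2*r^2 - (a1*b1+a2*b2)^2)*hp
      + (-r^4/2 + r^2*(a1*b1+a2*b2) - 2*(a1*p1+a2*p2)*(b1*p1+b2*p2))*hX )
  have hq3 : (2*r^2 - 2*(a1*p1+a2*p2))*(2*r^2 - 2*(b1*p1+b2*p2))
      = (2*(a1*p1+a2*p2) + 2*(b1*p1+b2*p2) - r^2)^2 :=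
    mul_left_cancel₀ hr2.ne' hq2
  rw [he1, he2, he3]
  have hn1 : (0:ℝ) ≤ 2*r^2 - 2*(a1*p1+a2*p2) := by rw [← he1]; positivity
  have hn2 : (0:ℝ) ≤ 2*r^2 - 2*(b1*p1+b2*p2) := by rw [← he2]; positivity
  have hmul : Real.sqrt (2*r^2 - 2*(a1*p1+a2*p2)) * Real.sqrt (2*r^2 - 2*(b1*p1+b2*p2))
      = 2*(a1*p1+a2*p2) + 2*(b1*p1+b2*p2) - r^2 := by
    rw [← Real.sqrt_mul hn1, hq3, Real.sqrt_sq (by linarith)]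
  have hfin : 2*r^2 + 2*(a1*p1+a2*p2) + 2*(b1*p1+b2*p2)
      = (Real.sqrt (2*r^2 - 2*(a1*p1+a2*p2)) + Real.sqrt (2*r^2 - 2*(b1*p1+b2*p2)))^2 := by
    rw [add_sq, Real.sq_sqrt hn1, Real.sq_sqrt hn2, mul_assoc, hmul]; ring
  rw [hfin, Real.sqrt_sq (by positivity)]


lemma vanschooten_side (A B X Y : EuclideanSpace ℝ (Fin 2))
    (h : 0 < ((B 0 - A 0)*(X 1 - A 1) - (B 1 - A 1)*(X 0 - A 0)) *
             ((B 0 - A 0)*(Y 1 - A 1) - (B 1 - A 1)*(Y 0 - A 0))) :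
    (affineSpan ℝ {A, B}).SSameSide X Y := by
  set fX := (B 0 - A 0)*(X 1 - A 1) - (B 1 - A 1)*(X 0 - A 0) with hfX
  set fY := (B 0 - A 0)*(Y 1 - A 1) - (B 1 - A 1)*(Y 0 - A 0) with hfY
  have hfX0 : fX ≠ 0 := by intro h0; rw [h0, zero_mul] at h; exact lt_irrefl 0 h
  have hfY0 : fY ≠ 0 := by intro h0; rw [h0, mul_zero] at h; exact lt_irrefl 0 h
  -- any point of the line has f-value 0
  have hline : ∀ Z : EuclideanSpace ℝ (Fin 2), Z ∈ affineSpan ℝ ({A, B} : Set _) →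
      (B 0 - A 0)*(Z 1 - A 1) - (B 1 - A 1)*(Z 0 - A 0) = 0 := by
    intro Z hZ
    have hZ' : (Z -ᵥ A) +ᵥ A ∈ line[ℝ, A, B] := by rwa [vsub_vadd]
    obtain ⟨t, ht⟩ := vadd_left_mem_affineSpan_pair.mp hZ'
    have h0 : (t • (B -ᵥ A)) 0 = (Z -ᵥ A) 0 := by rw [ht]
    have h1 : (t • (B -ᵥ A)) 1 = (Z -ᵥ A) 1 := by rw [ht]
    simp only [PiLp.smul_apply, vsub_eq_sub, PiLp.sub_apply, smul_eq_mul] at h0 h1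
    linear_combination -(B 0 - A 0)*h1 + (B 1 - A 1)*h0
  have hXs : X ∉ affineSpan ℝ ({A, B} : Set _) := fun hm => hfX0 (hline X hm)
  have hYs : Y ∉ affineSpan ℝ ({A, B} : Set _) := fun hm => hfY0 (hline Y hm)
  have hA : A ∈ affineSpan ℝ ({A, B} : Set _) := left_mem_affineSpan_pair ℝ A B
  refine ⟨(AffineSubspace.wSameSide_iff_exists_left hA).mpr (Or.inr ?_), hXs, hYs⟩
  set k : ℝ := fY / fX with hk
  have hkpos : 0 < k := by
    rcases lt_or_gt_of_ne hfX0 with hneg | hpos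
    · have : fY < 0 := by nlinarith
      exact div_pos_of_neg_of_neg this hneg
    · have : 0 < fY := by nlinarith
      exact div_pos this hpos
  refine ⟨((Y -ᵥ A) - k • (X -ᵥ A)) +ᵥ A, ?_, ?_⟩
  · -- membership: this point lies on line AB
    apply vadd_left_mem_affineSpan_pair.mpr
    have hL : (B 0 - A 0) * ((Y 1 - A 1) - k * (X 1 - A 1))
        - (B 1 - A 1) * ((Y 0 - A 0) - k * (X 0 - A 0)) = 0 := by
      have : fY - k * fX = 0 := by rw [hk]; field_simp; ring
      linear_combination this
    by_cases hB0 : B 0 - A 0 = 0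
    · refine ⟨((Y 1 - A 1) - k * (X 1 - A 1)) / (B 1 - A 1), ?_⟩
      have hB1 : B 1 - A 1 ≠ 0 := by
        intro hB1; apply hfX0; rw [hfX, hB0, hB1]; ring
      have h' : (B 1 - A 1) * ((Y 0 - A 0) - k * (X 0 - A 0)) = 0 := by
        linear_combination -hL + ((Y 1 - A 1) - k * (X 1 - A 1)) * hB0
      have hv0 : (Y 0 - A 0) - k * (X 0 - A 0) = 0 := by
        rcases mul_eq_zero.mp h' with h'' | h''
        · exact absurd h'' hB1
        · exact h''
      ext i
      fin_cases i <;>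
        simp only [Fin.zero_eta, Fin.mk_one, Fin.isValue, PiLp.smul_apply, vsub_eq_sub, PiLp.sub_apply, smul_eq_mul, PiLp.add_apply]
      · rw [hB0]; simpa using hv0.symm
      · field_simp
    · refine ⟨((Y 0 - A 0) - k * (X 0 - A 0)) / (B 0 - A 0), ?_⟩
      ext i
      fin_cases i <;>
        simp only [Fin.zero_eta, Fin.mk_one, Fin.isValue, PiLp.smul_apply, vsub_eq_sub, PiLp.sub_apply, smul_eq_mul, PiLp.add_apply]
      · field_simp
      · field_simp
        linear_combination -hL
  · -- SameRay
    have : Y -ᵥ (((Y -ᵥ A) - k • (X -ᵥ A)) +ᵥ A) = k • (X -ᵥ A) := by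
      rw [vsub_vadd_eq_vsub_sub]; abel
    rw [this]
    exact SameRay.sameRay_nonneg_smul_right (X -ᵥ A) hkpos.le

/-- van Schooten's theorem: if A₁A₂A₃ is an equilateral triangle inscribed in a
circle of center O and P is a point of that circle on the arc between A₁ and A₂
not containing A₃ (i.e. P is not strictly on the same side of line A₁A₂ as A₃),
then |A₁P| + |A₂P| = |A₃P|. -/
theorem stmt8 (A₁ A₂ A₃ P O : EuclideanSpace ℝ (Fin 2)) (r : ℝ)
    (h₁₂ : dist A₁ A₂ = dist A₂ A₃) (h₂₃ : dist A₂ A₃ = dist A₃ A₁)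
    (hnz : dist A₁ A₂ ≠ 0)
    (hc₁ : dist O A₁ = r) (hc₂ : dist O A₂ = r) (hc₃ : dist O A₃ = r)
    (hP : dist O P = r)
    (harc : ¬ (affineSpan ℝ {A₁, A₂}).SSameSide A₃ P) :
    dist A₁ P + dist A₂ P = dist A₃ P := by
  have dform : ∀ X Y : EuclideanSpace ℝ (Fin 2),
      dist X Y = Real.sqrt ((X 0 - Y 0)^2 + (X 1 - Y 1)^2) := by
    intro X Y
    rw [EuclideanSpace.dist_eq, Fin.sum_univ_two]
    simp [Real.dist_eq, sq_abs]
  have dsq : ∀ X Y : EuclideanSpace ℝ (Fin 2),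
      dist X Y ^ 2 = (X 0 - Y 0)^2 + (X 1 - Y 1)^2 := by
    intro X Y
    rw [dform X Y, Real.sq_sqrt (by positivity)]
  -- centered coordinates
  set a1 := A₁ 0 - O 0; set a2 := A₁ 1 - O 1
  set b1 := A₂ 0 - O 0; set b2 := A₂ 1 - O 1
  set c1 := A₃ 0 - O 0; set c2 := A₃ 1 - O 1
  set p1 := P 0 - O 0; set p2 := P 1 - O 1
  have ha : a1^2+a2^2 = r^2 := by
    have := dsq O A₁; rw [hc₁] at this; linear_combination -this
  have hb : b1^2+b2^2 = r^2 := by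
    have := dsq O A₂; rw [hc₂] at this; linear_combination -this
  have hcc : c1^2+c2^2 = r^2 := by
    have := dsq O A₃; rw [hc₃] at this; linear_combination -this
  have hp : p1^2+p2^2 = r^2 := by
    have := dsq O P; rw [hP] at this; linear_combination -this
  have h1 : (a1-b1)^2+(a2-b2)^2 = (b1-c1)^2+(b2-c2)^2 := by
    have e1 := dsq A₁ A₂; have e2 := dsq A₂ A₃
    rw [h₁₂] at e1
    linear_combination e2 - e1
  have h2 : (b1-c1)^2+(b2-c2)^2 = (c1-a1)^2+(c2-a2)^2 := by
    have e1 := dsq A₂ A₃; have e2 := dsq A₃ A₁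
    rw [h₂₃] at e1
    linear_combination e2 - e1
  have hnz' : (a1-b1)^2+(a2-b2)^2 ≠ 0 := by
    have := dsq A₁ A₂
    intro h0
    apply pow_ne_zero 2 hnz
    rw [this]; linear_combination h0
  have hsign : ((b1-a1)*(c2-a2) - (b2-a2)*(c1-a1)) * ((b1-a1)*(p2-a2) - (b2-a2)*(p1-a1)) ≤ 0 := by
    by_contra h0
    push_neg at h0
    apply harc
    apply vanschooten_side A₁ A₂ A₃ P
    have : ((A₂ 0 - A₁ 0)*(A₃ 1 - A₁ 1) - (A₂ 1 - A₁ 1)*(A₃ 0 - A₁ 0)) *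
           ((A₂ 0 - A₁ 0)*(P 1 - A₁ 1) - (A₂ 1 - A₁ 1)*(P 0 - A₁ 0))
         = ((b1-a1)*(c2-a2) - (b2-a2)*(c1-a1)) * ((b1-a1)*(p2-a2) - (b2-a2)*(p1-a1)) := by
      ring
    rw [this]
    exact h0
  have key := vanschooten_alg a1 a2 b1 b2 c1 c2 p1 p2 r ha hb hcc hp h1 h2 hnz' hsign
  rw [dform A₁ P, dform A₂ P, dform A₃ P]
  rw [show (A₁ 0 - P 0)^2 + (A₁ 1 - P 1)^2 = (a1-p1)^2+(a2-p2)^2 by ring,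
      show (A₂ 0 - P 0)^2 + (A₂ 1 - P 1)^2 = (b1-p1)^2+(b2-p2)^2 by ring,
      show (A₃ 0 - P 0)^2 + (A₃ 1 - P 1)^2 = (c1-p1)^2+(c2-p2)^2 by ring]
  exact key
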